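/- Let p₁, p₂, p₃, p₄ ∈ ℝ² be points in general position (no three collinear), and for each i let e_i ∈ ℝ² with e_i ≠ p_i, such that the line p_i e_i meets the diagonal line through p_{i-1} and p_{i+1} (indices mod 4) in a unique point q_i. Suppose there exist nonzero tensions w₁₂, w₂₃, w₃₄, w₄₁ on the cycle edges and nonzero u_i on the framing edges p_i e_i with equilibrium at each p_i: u_i(p_i - e_i) + w_{i-1,i}(p_i - p_{i-1}) + w_{i,i+1}(p_i - p_{i+1}) = 0. Then the cross-ratios satisfy cr(q₁, p₄, q₃, p₂) = cr(q₂, p₃, q₄, p₁), where cr(a,b,c,d) = ((a-b)/(b-c)) * ((c-d)/(d-a)) computed as ratios of collinear vectors. -/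
import Mathlib


/-- Linear independence of `a - p` and `b - p` from non-collinearity of `{p, a, b}`. -/
lemma indep_aux (p a b : Fin 2 → ℝ)
    (h : ¬ Collinear ℝ ({p, a, b} : Set (Fin 2 → ℝ)))
    (c d : ℝ) (hcd : c • (a - p) + d • (b - p) = 0) : c = 0 ∧ d = 0 := by
  by_contra hne
  apply h
  rcases eq_or_ne d 0 with hd | hd
  · subst hd
    have hc : c ≠ 0 := by tauto
    have ha : a = p := by
      have h0 : c • (a - p) = 0 := by simpa using hcd
      rcases smul_eq_zero.mp h0 with h' | h'
      · exact absurd h' hc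
      · exact sub_eq_zero.mp h'
    subst ha
    simpa [Set.insert_comm, Set.pair_comm] using (collinear_pair ℝ a b)
  · have hb : b = (-(c/d)) • (a - p) + p := by
      have h2 : d • b = (-c) • (a - p) + d • p := by
        linear_combination (norm := module) hcd
      have h3 : d • b = d • ((-(c/d)) • (a - p) + p) := by
        rw [h2]
        match_scalars <;> (field_simp; try ring)
      exact smul_right_injective _ hd h3
    apply (collinear_iff_of_mem (show p ∈ ({p, a, b} : Set (Fin 2 → ℝ)) by simp)).mpr
    refine ⟨a - p, ?_⟩
    intro x hx
    simp only [Set.mem_insert_iff, Set.mem_singleton_iff] at hx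
    rcases hx with hx | hx | hx
    · exact ⟨0, by simp [hx]⟩
    · exact ⟨1, by simp [hx]⟩
    · exact ⟨-(c/d), by rw [hx, hb]; rfl⟩

/-- Key computation at one vertex: the intersection point of the framing line with the
diagonal has barycentric coordinate `w_b / (w_a + w_b)`. -/
lemma vertex_aux (p a b e z : Fin 2 → ℝ)
    (hind : ∀ c d : ℝ, c • (a - p) + d • (b - p) = 0 → c = 0 ∧ d = 0)
    (u wa wb s t : ℝ) (hu : u ≠ 0)
    (heq : u • (p - e) + wa • (p - a) + wb • (p - b) = 0)
    (hz1 : z = p + s • (e - p)) (hz2 : z = a + t • (b - a)) :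
    wa + wb ≠ 0 ∧ t * (wa + wb) = wb := by
  have h0 : p + s • (e - p) = a + t • (b - a) := hz1.symm.trans hz2
  have key : (u*(1-t) + s*wa) • (a - p) + (u*t + s*wb) • (b - p) = 0 := by
    linear_combination (norm := module) (-u) • h0 + (-s) • heq
  obtain ⟨h1, h2⟩ := hind _ _ key
  have hsum : u + s*(wa+wb) = 0 := by linear_combination h1 + h2
  have hs : s ≠ 0 := by
    rintro rfl
    apply hu
    linarith
  constructor
  · intro h
    apply hu
    rw [h, mul_zero] at hsum
    linarith
  · have h4 : s * (t*(wa+wb) - wb) = 0 := by linear_combination t*h1 + (t-1)*h2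
    rcases mul_eq_zero.mp h4 with h | h
    · exact absurd h hs
    · linarith

lemma ncol3 {x y z : Fin 2 → ℝ} (h : AffineIndependent ℝ ![x, y, z])
    {x' y' z' : Fin 2 → ℝ} (hs : ({x, y, z} : Set (Fin 2 → ℝ)) = {x', y', z'}) :
    ¬ Collinear ℝ ({x', y', z'} : Set (Fin 2 → ℝ)) := by
  rw [← hs]; exact affineIndependent_iff_not_collinear_set.mp h

/-- For a framed quadrilateral in the plane with an everywhere non-zero
self-stress, the cross-ratios on the two diagonals agree:
`cr(q₁, p₄, q₃, p₂) = cr(q₂, p₃, q₄, p₁)`. -/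
theorem stmt_10 (p₁ p₂ p₃ p₄ e₁ e₂ e₃ e₄ : Fin 2 → ℝ)
    (h₁₂₃ : AffineIndependent ℝ ![p₁, p₂, p₃]) (h₁₂₄ : AffineIndependent ℝ ![p₁, p₂, p₄])
    (h₁₃₄ : AffineIndependent ℝ ![p₁, p₃, p₄]) (h₂₃₄ : AffineIndependent ℝ ![p₂, p₃, p₄])
    (he₁ : e₁ ≠ p₁) (he₂ : e₂ ≠ p₂) (he₃ : e₃ ≠ p₃) (he₄ : e₄ ≠ p₄)
    (q₁ q₂ q₃ q₄ : Fin 2 → ℝ)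
    -- q_i lies on the line p_i e_i and on the diagonal p_{i-1} p_{i+1}
    (hq₁ : (∃ s : ℝ, q₁ = p₁ + s • (e₁ - p₁)) ∧ (∃ s : ℝ, q₁ = p₄ + s • (p₂ - p₄)))
    (hq₂ : (∃ s : ℝ, q₂ = p₂ + s • (e₂ - p₂)) ∧ (∃ s : ℝ, q₂ = p₁ + s • (p₃ - p₁)))
    (hq₃ : (∃ s : ℝ, q₃ = p₃ + s • (e₃ - p₃)) ∧ (∃ s : ℝ, q₃ = p₂ + s • (p₄ - p₂)))
    (hq₄ : (∃ s : ℝ, q₄ = p₄ + s • (e₄ - p₄)) ∧ (∃ s : ℝ, q₄ = p₃ + s • (p₁ - p₃)))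
    (w₁₂ w₂₃ w₃₄ w₄₁ u₁ u₂ u₃ u₄ : ℝ)
    (hw₁₂ : w₁₂ ≠ 0) (hw₂₃ : w₂₃ ≠ 0) (hw₃₄ : w₃₄ ≠ 0) (hw₄₁ : w₄₁ ≠ 0)
    (hu₁ : u₁ ≠ 0) (hu₂ : u₂ ≠ 0) (hu₃ : u₃ ≠ 0) (hu₄ : u₄ ≠ 0)
    (heq₁ : u₁ • (p₁ - e₁) + w₄₁ • (p₁ - p₄) + w₁₂ • (p₁ - p₂) = 0)
    (heq₂ : u₂ • (p₂ - e₂) + w₁₂ • (p₂ - p₁) + w₂₃ • (p₂ - p₃) = 0)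
    (heq₃ : u₃ • (p₃ - e₃) + w₂₃ • (p₃ - p₂) + w₃₄ • (p₃ - p₄) = 0)
    (heq₄ : u₄ • (p₄ - e₄) + w₃₄ • (p₄ - p₃) + w₄₁ • (p₄ - p₁) = 0)
    (α β γ δ : ℝ)
    (hα : q₁ - p₄ = α • (p₄ - q₃)) (hβ : q₃ - p₂ = β • (p₂ - q₁))
    (hγ : q₂ - p₃ = γ • (p₃ - q₄)) (hδ : q₄ - p₁ = δ • (p₁ - q₂)) :
    α * β = γ * δ := by
  obtain ⟨⟨s₁, hs₁⟩, ⟨t₁, ht₁⟩⟩ := hq₁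
  obtain ⟨⟨s₂, hs₂⟩, ⟨t₂, ht₂⟩⟩ := hq₂
  obtain ⟨⟨s₃, hs₃⟩, ⟨t₃, ht₃⟩⟩ := hq₃
  obtain ⟨⟨s₄, hs₄⟩, ⟨t₄, ht₄⟩⟩ := hq₄
  -- linear independence at each vertex
  have hind₁ := indep_aux p₁ p₄ p₂ (ncol3 h₁₂₄ (by ext w; simp [Set.mem_insert_iff]; tauto))
  have hind₂ := indep_aux p₂ p₁ p₃ (ncol3 h₁₂₃ (by ext w; simp [Set.mem_insert_iff]; tauto))
  have hind₃ := indep_aux p₃ p₂ p₄ (ncol3 h₂₃₄ (by ext w; simp [Set.mem_insert_iff]; tauto))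
  have hind₄ := indep_aux p₄ p₃ p₁ (ncol3 h₁₃₄ (by ext w; simp [Set.mem_insert_iff]; tauto))
  obtain ⟨hσ₁, hE₁⟩ := vertex_aux p₁ p₄ p₂ e₁ q₁ hind₁ u₁ w₄₁ w₁₂ s₁ t₁ hu₁ heq₁ hs₁ ht₁
  obtain ⟨hσ₂, hE₂⟩ := vertex_aux p₂ p₁ p₃ e₂ q₂ hind₂ u₂ w₁₂ w₂₃ s₂ t₂ hu₂ heq₂ hs₂ ht₂
  obtain ⟨hσ₃, hE₃⟩ := vertex_aux p₃ p₂ p₄ e₃ q₃ hind₃ u₃ w₂₃ w₃₄ s₃ t₃ hu₃ heq₃ hs₃ ht₃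
  obtain ⟨hσ₄, hE₄⟩ := vertex_aux p₄ p₃ p₁ e₄ q₄ hind₄ u₄ w₃₄ w₄₁ s₄ t₄ hu₄ heq₄ hs₄ ht₄
  -- the diagonals are nondegenerate
  have hd₁ : p₂ - p₄ ≠ 0 := by
    refine sub_ne_zero.mpr ?_
    have := h₁₂₄.injective.ne (show (1 : Fin 3) ≠ 2 by decide)
    simpa using this
  have hd₂ : p₃ - p₁ ≠ 0 := by
    refine sub_ne_zero.mpr ?_
    have := h₁₂₃.injective.ne (show (2 : Fin 3) ≠ 0 by decide)
    simpa using this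
  -- scalar relations from hα, hβ, hγ, hδ
  have R1 : t₁ + α*(1-t₃) = 0 := by
    have hv : (t₁ + α*(1-t₃)) • (p₂ - p₄) = 0 := by
      linear_combination (norm := module) hα - ht₁ - α • ht₃
    have := (smul_eq_zero.mp hv).resolve_right hd₁
    linarith
  have R2 : t₃ + β*(1-t₁) = 0 := by
    have hv : (t₃ + β*(1-t₁)) • (p₂ - p₄) = 0 := by
      linear_combination (norm := module) ht₃ + β • ht₁ - hβ
    have := (smul_eq_zero.mp hv).resolve_right hd₁
    linarith
  have R3 : t₂ - 1 - γ*t₄ = 0 := by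
    have hv : (t₂ - 1 - γ*t₄) • (p₃ - p₁) = 0 := by
      linear_combination (norm := module) hγ - ht₂ - γ • ht₄
    have := (smul_eq_zero.mp hv).resolve_right hd₂
    linarith
  have R4 : 1 - t₄ + δ*t₂ = 0 := by
    have hv : (1 - t₄ + δ*t₂) • (p₃ - p₁) = 0 := by
      linear_combination (norm := module) hδ - ht₄ - δ • ht₂
    have := (smul_eq_zero.mp hv).resolve_right hd₂
    linarith
  -- product identities
  have P1 : α*(w₂₃*(w₄₁+w₁₂)) = -(w₁₂*(w₂₃+w₃₄)) := by
    linear_combination ((w₄₁+w₁₂)*(w₂₃+w₃₄))*R1 - (w₂₃+w₃₄)*hE₁ + (α*(w₄₁+w₁₂))*hE₃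
  have P2 : β*(w₄₁*(w₂₃+w₃₄)) = -(w₃₄*(w₄₁+w₁₂)) := by
    linear_combination ((w₂₃+w₃₄)*(w₄₁+w₁₂))*R2 - (w₄₁+w₁₂)*hE₃ + (β*(w₂₃+w₃₄))*hE₁
  have P3 : γ*(w₄₁*(w₁₂+w₂₃)) = -(w₁₂*(w₃₄+w₄₁)) := by
    linear_combination (w₃₄+w₄₁)*hE₂ - ((w₁₂+w₂₃)*(w₃₄+w₄₁))*R3 - (γ*(w₁₂+w₂₃))*hE₄
  have P4 : δ*(w₂₃*(w₃₄+w₄₁)) = -(w₃₄*(w₁₂+w₂₃)) := by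
    linear_combination (w₁₂+w₂₃)*hE₄ + ((w₁₂+w₂₃)*(w₃₄+w₄₁))*R4 - (δ*(w₃₄+w₄₁))*hE₂
  have F1 : α*β*(w₂₃*w₄₁) = w₁₂*w₃₄ := by
    apply mul_right_cancel₀ (mul_ne_zero hσ₁ hσ₃)
    linear_combination (β*(w₄₁*(w₂₃+w₃₄)))*P1 - (w₁₂*(w₂₃+w₃₄))*P2
  have F2 : γ*δ*(w₂₃*w₄₁) = w₁₂*w₃₄ := by
    apply mul_right_cancel₀ (mul_ne_zero hσ₂ hσ₄)
    linear_combination (δ*(w₂₃*(w₃₄+w₄₁)))*P3 - (w₁₂*(w₃₄+w₄₁))*P4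
  exact mul_right_cancel₀ (mul_ne_zero hw₂₃ hw₄₁) (F1.trans F2.symm)
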